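/- Let G be a block graph, let P be a shortest path in G, and let C be a maximal clique of G. Then P and C have at most one edge in common, i.e., |E(P) ∩ E(C)| ≤ 1. -/

import Mathlib

open MvPolynomial SimpleGraph
open scoped Classical

/-- A graph is a block graph if every two distinct vertices joined by two
internally-vertex-disjoint paths are adjacent; equivalently, every
2-connected component of the graph is a complete subgraph. -/
def IsBlockGraph {V : Type*} (G : SimpleGraph V) : Prop :=
  ∀ u v : V, u ≠ v →
    (∃ p q : G.Walk u v, p.IsPath ∧ q.IsPath ∧ p ≠ q ∧
      ∀ w, w ∈ p.support → w ∈ q.support → w = u ∨ w = v) →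
    G.Adj u v

/-- A maximal clique: an inclusion-maximal set of pairwise adjacent vertices. -/
def IsMaxClique {V : Type*} (G : SimpleGraph V) (C : Finset V) : Prop :=
  G.IsClique (C : Set V) ∧ ∀ D : Finset V, G.IsClique (D : Set V) → C ⊆ D → C = D

/-- A shortest path between its endpoints: a path of minimal length. -/
def IsShortestPath {V : Type*} (G : SimpleGraph V) {u v : V} (p : G.Walk u v) : Prop :=
  p.IsPath ∧ p.length = G.dist u v

/-- Λ(p): the multiset of vertex colors and edge colors along a walk. -/
def pathColors {V : Type*} {G : SimpleGraph V} (vcol : V → ℕ) (ecol : Sym2 V → ℕ)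
    {u v : V} (p : G.Walk u v) : Multiset ℕ :=
  ↑(p.support.map vcol) + ↑(p.edges.map ecol)


lemma aux_clique_count {V : Type*} [DecidableEq V]
    (G : SimpleGraph V) (hconn : G.Connected) (C : Finset V) (hcl : G.IsClique (C : Set V)) :
    ∀ {u v : V} (p : G.Walk u v), p.IsPath → p.length = G.dist u v →
      (p.edges.countP fun e => decide (e ∈ C.sym2)) ≤ 1 := by
  intro u v p
  induction p with
  | nil => simp
  | @cons u w v h q ih =>
    intro hpath hlen
    obtain ⟨hq, hu⟩ := (SimpleGraph.Walk.cons_isPath_iff h q).mp hpath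
    rw [SimpleGraph.Walk.edges_cons, List.countP_cons]
    by_cases hmem : s(u, w) ∈ C.sym2
    · have hz : q.edges.countP (fun e => decide (e ∈ C.sym2)) = 0 := by
        rw [List.countP_eq_zero]
        intro e he
        simp only [decide_eq_true_eq]
        intro heC
        -- e = s(a,b), endpoints in C, derive contradiction
        induction e with
        | _ a b =>
        have hab : G.Adj a b := q.adj_of_mem_edges he
        have haC : a ∈ C := by
          have := Finset.mem_sym2_iff.mp heC
          exact this a (by simp)
        have hbC : b ∈ C := by
          have := Finset.mem_sym2_iff.mp heC
          exact this b (by simp)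
        have huC : u ∈ C := (Finset.mem_sym2_iff.mp hmem) u (by simp)
        -- pick x ∈ {a,b} with x ≠ w
        obtain ⟨x, hxC, hxs, hxw⟩ : ∃ x, x ∈ C ∧ x ∈ q.support ∧ x ≠ w := by
          by_cases haw : a = w
          · exact ⟨b, hbC, q.snd_mem_support_of_mem_edges he, fun hbw => hab.ne (haw ▸ hbw ▸ rfl)⟩
          · exact ⟨a, haC, q.fst_mem_support_of_mem_edges he, haw⟩
        have hxu : x ≠ u := fun hxy => hu (hxy ▸ hxs)
        have hadj : G.Adj u x := hcl huC hxC (Ne.symm hxu)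
        -- shortcut walk
        have hdrop : G.dist u v ≤ ((q.dropUntil x hxs).cons hadj).length :=
          SimpleGraph.dist_le _
        have hsplit : (q.takeUntil x hxs).length + (q.dropUntil x hxs).length = q.length := by
          rw [← SimpleGraph.Walk.length_append, SimpleGraph.Walk.take_spec]
        have htake : 1 ≤ (q.takeUntil x hxs).length := by
          rcases Nat.eq_zero_or_pos (q.takeUntil x hxs).length with h0 | h1
          · exact absurd (SimpleGraph.Walk.eq_of_length_eq_zero h0).symm hxw
          · exact h1
        simp only [SimpleGraph.Walk.length_cons] at hdrop hlen
        omega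
      rw [hz, if_pos (by simp [hmem])]
    · simp only [hmem, decide_false, if_false]
      apply ih hq
      have h1 : G.dist w v ≤ q.length := SimpleGraph.dist_le q
      have h2 : G.dist u v ≤ G.dist u w + G.dist w v := hconn.dist_triangle
      have h3 : G.dist u w ≤ 1 := by
        have := SimpleGraph.dist_le (SimpleGraph.Walk.cons h SimpleGraph.Walk.nil)
        simpa using this
      simp only [SimpleGraph.Walk.length_cons] at hlen
      omega

/-- Lemma 2.6: a shortest path in a block graph shares at most one
edge with any maximal clique. -/
theorem shortest_path_clique_at_most_one_edge {V : Type*} [Fintype V] [DecidableEq V]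
    (G : SimpleGraph V) (hconn : G.Connected) (hblock : IsBlockGraph G)
    {u v : V} (p : G.Walk u v) (hp : IsShortestPath G p)
    (C : Finset V) (hC : IsMaxClique G C) :
    (p.edges.countP fun e => decide (e ∈ C.sym2)) ≤ 1 :=
  aux_clique_count G hconn C hC.1 p hp.1 hp.2
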